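/- Let Φ₁, Φ₂ : ℝ × ℝ × ℝ → M₂(ℂ) be matrix-valued functions whose columns satisfy, for all x, t ∈ ℝ and k ∈ ℝ, the symmetries Φ₂^{(2)}(x,t,k) = Λ · conj( Φ₁^{(1)}(−x,−t,−k) ) and Φ₂^{(1)}(x,t,k) = Λ⁻¹ · conj( Φ₁^{(2)}(−x,−t,−k) ). Define s₁₁(x,t,k) := det( Φ₁^{(1)}(x,t,k) | Φ₂^{(2)}(x,t,k) ), s₂₂(x,t,k) := det( Φ₂^{(1)}(x,t,k) | Φ₁^{(2)}(x,t,k) ), s₁₂(x,t,k) := det( Φ₁^{(2)}(x,t,k) | Φ₂^{(2)}(x,t,k) ), and s₂₁(x,t,k) := det( Φ₂^{(1)}(x,t,k) | Φ₁^{(1)}(x,t,k) ). Then for all x, t, k: s₁₁(x,t,k) = conj( s₁₁(−x,−t,−k) ), s₂₂(x,t,k) = conj( s₂₂(−x,−t,−k) ), and s₁₂(x,t,k) = conj( s₂₁(−x,−t,−k) ). (These are the scattering-data symmetries (2.11), which for x,t-independent s_{ij} give a₁(k) = conj a₁(−k̄), a₂(k) = conj a₂(−k̄), b(k) = conj b(−k̄)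 on ℝ.) -/

import Mathlib

open Matrix

noncomputable section

/-- Λ = [[0,-1],[1,0]]. -/
def Lam : Matrix (Fin 2) (Fin 2) ℂ := !![0, -1; 1, 0]

/-- Λ⁻¹ = [[0,1],[-1,0]]. -/
def LamInv : Matrix (Fin 2) (Fin 2) ℂ := !![0, 1; -1, 0]

/-- The 2×2 matrix with columns `u` and `v`. -/
def cols (u v : Fin 2 → ℂ) : Matrix (Fin 2) (Fin 2) ℂ :=
  Matrix.of fun i j => ![u i, v i] j

/-- The j-th column of a matrix. -/
def col (M : Matrix (Fin 2) (Fin 2) ℂ) (j : Fin 2) : Fin 2 → ℂ := fun i => M i j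

/-- s₁₁ = det(Φ₁⁽¹⁾ | Φ₂⁽²⁾). -/
def s11 (Φ₁ Φ₂ : ℝ → ℝ → ℝ → Matrix (Fin 2) (Fin 2) ℂ) (x t k : ℝ) : ℂ :=
  (cols (_root_.col (Φ₁ x t k) 0) (_root_.col (Φ₂ x t k) 1)).det

/-- s₂₂ = det(Φ₂⁽¹⁾ | Φ₁⁽²⁾). -/
def s22 (Φ₁ Φ₂ : ℝ → ℝ → ℝ → Matrix (Fin 2) (Fin 2) ℂ) (x t k : ℝ) : ℂ :=
  (cols (_root_.col (Φ₂ x t k) 0) (_root_.col (Φ₁ x t k) 1)).det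

/-- s₁₂ = det(Φ₁⁽²⁾ | Φ₂⁽²⁾). -/
def s12 (Φ₁ Φ₂ : ℝ → ℝ → ℝ → Matrix (Fin 2) (Fin 2) ℂ) (x t k : ℝ) : ℂ :=
  (cols (_root_.col (Φ₁ x t k) 1) (_root_.col (Φ₂ x t k) 1)).det

/-- s₂₁ = det(Φ₂⁽¹⁾ | Φ₁⁽¹⁾). -/
def s21 (Φ₁ Φ₂ : ℝ → ℝ → ℝ → Matrix (Fin 2) (Fin 2) ℂ) (x t k : ℝ) : ℂ :=
  (cols (_root_.col (Φ₂ x t k) 0) (_root_.col (Φ₁ x t k) 0)).det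

/-- The scattering-data symmetries (2.11). -/
theorem scattering_symmetries (Φ₁ Φ₂ : ℝ → ℝ → ℝ → Matrix (Fin 2) (Fin 2) ℂ)
    (hsym2 : ∀ x t k : ℝ,
      _root_.col (Φ₂ x t k) 1 =
        Lam.mulVec (fun i => starRingEnd ℂ (_root_.col (Φ₁ (-x) (-t) (-k)) 0 i)))
    (hsym1 : ∀ x t k : ℝ,
      _root_.col (Φ₂ x t k) 0 =
        LamInv.mulVec (fun i => starRingEnd ℂ (_root_.col (Φ₁ (-x) (-t) (-k)) 1 i))) :
    ∀ x t k : ℝ,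
      s11 Φ₁ Φ₂ x t k = starRingEnd ℂ (s11 Φ₁ Φ₂ (-x) (-t) (-k)) ∧
      s22 Φ₁ Φ₂ x t k = starRingEnd ℂ (s22 Φ₁ Φ₂ (-x) (-t) (-k)) ∧
      s12 Φ₁ Φ₂ x t k = starRingEnd ℂ (s21 Φ₁ Φ₂ (-x) (-t) (-k)) := by
  intro x t k
  have h2a := congrFun (hsym2 x t k)
  have h2b := congrFun (hsym2 (-x) (-t) (-k))
  have h1a := congrFun (hsym1 x t k)
  have h1b := congrFun (hsym1 (-x) (-t) (-k))
  simp only [neg_neg] at h2b h1b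
  simp only [s11, s22, s12, s21, cols, _root_.col, Lam, LamInv, Matrix.det_fin_two,
    Matrix.mulVec, Matrix.of_apply] at *
  have e2a0 := h2a 0; have e2a1 := h2a 1
  have e2b0 := h2b 0; have e2b1 := h2b 1
  have e1a0 := h1a 0; have e1a1 := h1a 1
  have e1b0 := h1b 0; have e1b1 := h1b 1
  simp [Matrix.cons_mulVec, Matrix.cons_dotProduct, Fin.isValue, Matrix.cons_val_zero,
    Matrix.cons_val_one, Matrix.head_cons, Matrix.head_fin_const] at *
  rw [e2a0, e2a1, e1a0, e1a1, e2b0, e2b1, e1b0, e1b1]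
  refine ⟨?_, ?_, ?_⟩ <;>
    simp only [Matrix.vecHead, Matrix.vecTail, Function.comp, map_neg, Complex.conj_conj,
      Fin.succ_zero_eq_one] <;> ring
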